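/- Let (Ω, μ) be a probability space, let k, n ≥ 1, let P be an invertible row-stochastic k×k real matrix (nonnegative entries, rows summing to 1), let d ∈ ℝ^k with 0 ≤ d_i ≤ 1 for all i, and set d̃ = P⁻¹ d. Fix weights α_1,…,α_n ∈ ℝ with |α_i| ≤ 1 and true label indices r(1),…,r(n) ∈ {1,…,k}, and let Z_1,…,Z_n : Ω → {1,…,k} be independent random variables with Pr(Z_i = j) = P_{r(i), j}. Set c₁ = 1 + √k·‖P⁻¹‖, where ‖·‖ is the operator norm induced by the Euclidean norm (spectral norm). Then for every δ ∈ (0,1), with probability at least 1 − δ, |(1/n) Σ_{i=1}^n α_i (d̃_{Z_i} − d_{r(i)})| ≤ c₁ √(2 log(2/δ) / n). -/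

import Mathlib

open MeasureTheory Matrix

open ProbabilityTheory Real Finset

lemma integral_comp_fin {Ω : Type*} [MeasurableSpace Ω] (μ : Measure Ω) [IsFiniteMeasure μ]
    {k : ℕ} (Y : Ω → Fin k) (hY : Measurable Y) (g : Fin k → ℝ) :
    ∫ ω, g (Y ω) ∂μ = ∑ j, (μ {ω | Y ω = j}).toReal * g j := by
  have hms : ∀ j : Fin k, MeasurableSet {ω | Y ω = j} := fun j => hY (measurableSet_singleton j)
  have h1 : (fun ω => g (Y ω)) =
      fun ω => ∑ j, Set.indicator {ω | Y ω = j} (fun _ => g j) ω := by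
    funext ω
    simp [Set.indicator_apply, Set.mem_setOf_eq, Finset.sum_ite_eq]
  rw [h1, integral_finset_sum]
  · refine Finset.sum_congr rfl fun j _ => ?_
    rw [integral_indicator_const _ (hms j), smul_eq_mul]; rfl
  · exact fun j _ => (integrable_const (g j)).indicator (hms j)

lemma mgf_bound_of_finite {Ω : Type*} [MeasurableSpace Ω] (μ : Measure Ω) [IsProbabilityMeasure μ]
    {k : ℕ} (Y : Ω → Fin k) (hY : Measurable Y)
    (p : Fin k → ℝ) (hp0 : ∀ j, 0 ≤ p j) (hp1 : ∑ j, p j = 1)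
    (hYd : ∀ j, μ {ω | Y ω = j} = ENNReal.ofReal (p j))
    (x : Fin k → ℝ) {c : ℝ} (hc : 0 < c) (hx : ∀ j, |x j| ≤ c)
    (hmean : ∑ j, p j * x j = 0) (t : ℝ) :
    mgf (fun ω => x (Y ω)) μ t ≤ exp (t ^ 2 * c ^ 2 / 2) := by
  have hmgf : mgf (fun ω => x (Y ω)) μ t = ∑ j, p j * exp (t * x j) := by
    rw [mgf, integral_comp_fin μ Y hY (fun j => exp (t * x j))]
    refine Finset.sum_congr rfl fun j _ => ?_
    rw [hYd j, ENNReal.toReal_ofReal (hp0 j)]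
  rw [hmgf]
  have key : ∀ j, exp (t * x j) ≤
      ((1 + x j / c) / 2) * exp (t * c) + ((1 - x j / c) / 2) * exp (-(t * c)) := by
    intro j
    have hxc : -1 ≤ x j / c ∧ x j / c ≤ 1 := by
      constructor
      · rw [neg_le, ← neg_div]
        exact (div_le_one hc).2 (by linarith [neg_le_of_abs_le (hx j)])
      · exact (div_le_one hc).2 (le_of_abs_le (hx j))
    have ha : (0:ℝ) ≤ (1 + x j / c) / 2 := by linarith [hxc.1]
    have hb : (0:ℝ) ≤ (1 - x j / c) / 2 := by linarith [hxc.2]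
    have hab : (1 + x j / c) / 2 + (1 - x j / c) / 2 = 1 := by ring
    have := convexOn_exp.2 (Set.mem_univ (t * c)) (Set.mem_univ (-(t * c))) ha hb hab
    simp only [smul_eq_mul] at this
    have harg : (1 + x j / c) / 2 * (t * c) + (1 - x j / c) / 2 * (-(t * c)) = t * x j := by
      field_simp; ring
    rwa [harg] at this
  calc ∑ j, p j * exp (t * x j)
      ≤ ∑ j, p j * (((1 + x j / c) / 2) * exp (t * c) + ((1 - x j / c) / 2) * exp (-(t * c))) :=
        Finset.sum_le_sum fun j _ => mul_le_mul_of_nonneg_left (key j) (hp0 j)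
    _ = (∑ j, p j) * ((exp (t * c) + exp (-(t * c))) / 2)
        + (∑ j, p j * x j) * ((exp (t * c) - exp (-(t * c))) / (2 * c)) := by
        rw [Finset.sum_mul, Finset.sum_mul, ← Finset.sum_add_distrib]
        refine Finset.sum_congr rfl fun j _ => ?_
        field_simp
        ring
    _ = Real.cosh (t * c) := by rw [hp1, hmean, Real.cosh_eq]; ring
    _ ≤ exp ((t * c) ^ 2 / 2) := Real.cosh_le_exp_half_sq _
    _ = exp (t ^ 2 * c ^ 2 / 2) := by ring_nf

lemma hoeffding_tail {Ω : Type*} [MeasurableSpace Ω] (μ : Measure Ω) [IsProbabilityMeasure μ]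
    {n : ℕ} (hn : 0 < n) (X : Fin n → Ω → ℝ) (hmeas : ∀ i, Measurable (X i))
    (hindep : iIndepFun X μ)
    {c : ℝ} (hc : 0 < c) (hbdd : ∀ i ω, |X i ω| ≤ c)
    (hmgf : ∀ i (t : ℝ), mgf (X i) μ t ≤ exp (t ^ 2 * c ^ 2 / 2))
    {ε : ℝ} (hε : 0 ≤ ε) :
    (μ {ω | ε ≤ ∑ i, X i ω}).toReal ≤ exp (-(ε ^ 2) / (2 * n * c ^ 2)) := by
  set t : ℝ := ε / (n * c ^ 2) with ht_def
  have hnpos : (0:ℝ) < n := Nat.cast_pos.2 hn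
  have ht : 0 ≤ t := div_nonneg hε (by positivity)
  have hint : ∀ i ∈ Finset.univ, Integrable (fun ω => exp (t * X i ω)) μ := by
    intro i _
    refine (integrable_const (exp (|t| * c))).mono'
      (((hmeas i).const_mul t).exp.aestronglyMeasurable) (ae_of_all _ fun ω => ?_)
    rw [Real.norm_eq_abs, Real.abs_exp]
    refine Real.exp_le_exp.2 ?_
    calc t * X i ω ≤ |t * X i ω| := le_abs_self _
      _ = |t| * |X i ω| := abs_mul _ _
      _ ≤ |t| * c := by gcongr; exact hbdd i ω
  have hS : Integrable (fun ω => exp (t * (∑ i, X i) ω)) μ :=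
    hindep.integrable_exp_mul_sum hmeas hint
  have hset : {ω | ε ≤ ∑ i, X i ω} = {ω | ε ≤ (∑ i, X i) ω} := by
    ext ω; simp
  rw [hset]
  have hch := measure_ge_le_exp_mul_mgf (X := ∑ i, X i) (μ := μ) ε ht hS
  rw [hindep.mgf_sum hmeas] at hch
  have hprod : ∏ i, mgf (X i) μ t ≤ exp (n * (t ^ 2 * c ^ 2 / 2)) := by
    calc ∏ i : Fin n, mgf (X i) μ t ≤ ∏ _i : Fin n, exp (t ^ 2 * c ^ 2 / 2) :=
          Finset.prod_le_prod (fun i _ => mgf_nonneg) (fun i _ => hmgf i t)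
      _ = exp (n * (t ^ 2 * c ^ 2 / 2)) := by
          rw [Finset.prod_const, ← Real.exp_nat_mul]
          simp
  refine hch.trans ?_
  have harith : exp (-t * ε) * exp (n * (t ^ 2 * c ^ 2 / 2)) = exp (-(ε ^ 2) / (2 * n * c ^ 2)) := by
    rw [← Real.exp_add]
    congr 1
    rw [ht_def]
    field_simp
    ring
  calc exp (-t * ε) * ∏ i, mgf (X i) μ t
      ≤ exp (-t * ε) * exp (n * (t ^ 2 * c ^ 2 / 2)) :=
        mul_le_mul_of_nonneg_left hprod (Real.exp_pos _).le
    _ = _ := harith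

/-- Hoeffding concentration for the noise-corrected score. `P` is an
invertible row-stochastic noise matrix, `d̃ = P⁻¹ d` the perturbed distances,
`Z i` independent noisy labels with `Pr(Z i = j) = P (r i) j`, and
`c₁ = 1 + √k ‖P⁻¹‖`. Then with probability at least `1 - δ`,
`|(1/n) ∑ i α i (d̃ (Z i) - d (r i))| ≤ c₁ √(2 log(2/δ) / n)`. -/
theorem pseudolabel_score_concentration
    {Ω : Type*} [MeasurableSpace Ω] (μ : Measure Ω) [IsProbabilityMeasure μ]
    (k n : ℕ) (hk : 1 ≤ k) (hn : 1 ≤ n)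
    (P : Matrix (Fin k) (Fin k) ℝ)
    (hPinv : IsUnit P.det)
    (hPnonneg : ∀ i j, 0 ≤ P i j)
    (hProw : ∀ i, ∑ j, P i j = 1)
    (d : Fin k → ℝ) (hd : ∀ i, 0 ≤ d i ∧ d i ≤ 1)
    (dTilde : Fin k → ℝ) (hdTilde : dTilde = P⁻¹ *ᵥ d)
    (α : Fin n → ℝ) (hα : ∀ i, |α i| ≤ 1)
    (r : Fin n → Fin k)
    (Z : Fin n → Ω → Fin k)
    (hZmeas : ∀ i, Measurable (Z i))
    (hindep : ProbabilityTheory.iIndepFun Z μ)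
    (hZdist : ∀ i j, μ {ω | Z i ω = j} = ENNReal.ofReal (P (r i) j))
    (c₁ : ℝ) (hc₁ : c₁ = 1 + Real.sqrt k * ‖Matrix.toEuclideanCLM (𝕜 := ℝ) P⁻¹‖)
    (δ : ℝ) (hδ0 : 0 < δ) (hδ1 : δ < 1) :
    ENNReal.ofReal (1 - δ) ≤
      μ {ω | |(1 / n : ℝ) * ∑ i, α i * (dTilde (Z i ω) - d (r i))|
          ≤ c₁ * Real.sqrt (2 * Real.log (2 / δ) / n)} := by
  have hnpos : (0:ℝ) < n := by exact_mod_cast Nat.lt_of_lt_of_le Nat.zero_lt_one hn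
  set T := Matrix.toEuclideanCLM (𝕜 := ℝ) P⁻¹ with hT
  have hc₁pos : 0 < c₁ := by rw [hc₁]; positivity
  -- coordinate bound on dTilde
  have hcoord : ∀ j : Fin k, |dTilde j| ≤ Real.sqrt k * ‖T‖ := by
    intro j
    set v : EuclideanSpace ℝ (Fin k) := (WithLp.equiv 2 (Fin k → ℝ)).symm d with hv
    have happ : T v = (WithLp.equiv 2 (Fin k → ℝ)).symm (P⁻¹ *ᵥ d) := by
      rw [hv, WithLp.equiv_symm_apply, Matrix.toEuclideanCLM_toLp]
    have hvnorm : ‖v‖ ≤ Real.sqrt k := by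
      rw [EuclideanSpace.norm_eq]
      have : ∑ i, ‖v i‖ ^ 2 ≤ (k : ℝ) := by
        calc ∑ i, ‖v i‖ ^ 2 ≤ ∑ _i : Fin k, (1:ℝ) := by
              refine Finset.sum_le_sum fun i _ => ?_
              have hvi : v i = d i := rfl
              rw [hvi, Real.norm_eq_abs, sq_abs]
              nlinarith [(hd i).1, (hd i).2]
          _ = (k : ℝ) := by simp
      exact Real.sqrt_le_sqrt this
    have hj : |dTilde j| = ‖(T v) j‖ := by
      rw [happ, hdTilde]
      rfl
    have hcomp : ‖(T v) j‖ ≤ ‖T v‖ := by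
      rw [EuclideanSpace.norm_eq]
      have h1 : ‖(T v) j‖ = Real.sqrt (‖(T v) j‖ ^ 2) := by
        rw [Real.sqrt_sq (norm_nonneg _)]
      rw [h1]
      refine Real.sqrt_le_sqrt ?_
      exact Finset.single_le_sum (f := fun i => ‖(T v) i‖ ^ 2)
        (fun i _ => by positivity) (Finset.mem_univ j)
    calc |dTilde j| = ‖(T v) j‖ := hj
      _ ≤ ‖T v‖ := hcomp
      _ ≤ ‖T‖ * ‖v‖ := T.le_opNorm v
      _ ≤ ‖T‖ * Real.sqrt k := by
          exact mul_le_mul_of_nonneg_left hvnorm (norm_nonneg _)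
      _ = Real.sqrt k * ‖T‖ := mul_comm _ _
  -- the summand functions
  set g : Fin n → Fin k → ℝ := fun i j => α i * (dTilde j - d (r i)) with hg
  have hbdd : ∀ i j, |g i j| ≤ c₁ := by
    intro i j
    have h1 : |d (r i)| ≤ 1 := abs_le.2 ⟨by linarith [(hd (r i)).1], (hd (r i)).2⟩
    calc |g i j| = |α i| * |dTilde j - d (r i)| := abs_mul _ _
      _ ≤ 1 * (|dTilde j| + |d (r i)|) := by
          refine mul_le_mul (hα i) ((abs_sub _ _).trans (le_refl _)) (abs_nonneg _) zero_le_one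
      _ ≤ c₁ := by rw [hc₁]; have := hcoord j; linarith
  -- mean zero
  have hPdT : P *ᵥ dTilde = d := by
    rw [hdTilde, Matrix.mulVec_mulVec, Matrix.mul_nonsing_inv P hPinv, Matrix.one_mulVec]
  have hPd : ∀ i0 : Fin k, ∑ j, P i0 j * dTilde j = d i0 := by
    intro i0
    have := congrFun hPdT i0
    simpa [Matrix.mulVec, dotProduct] using this
  have hmean : ∀ i, ∑ j, P (r i) j * g i j = 0 := by
    intro i
    have hterm : ∀ j, P (r i) j * g i j
        = α i * (P (r i) j * dTilde j) - (α i * d (r i)) * P (r i) j := fun j => by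
      simp only [hg]; ring
    rw [Finset.sum_congr rfl fun j _ => hterm j, Finset.sum_sub_distrib,
      ← Finset.mul_sum, ← Finset.mul_sum, hPd (r i), hProw (r i)]
    ring
  -- random variables
  set X : Fin n → Ω → ℝ := fun i => g i ∘ Z i with hX
  have hmeasX : ∀ i, Measurable (X i) := fun i =>
    (measurable_of_finite (g i)).comp (hZmeas i)
  have hindepX : iIndepFun X μ :=
    hindep.comp g fun i => measurable_of_finite (g i)
  have hmgfX : ∀ i (t : ℝ), mgf (X i) μ t ≤ Real.exp (t ^ 2 * c₁ ^ 2 / 2) := fun i t =>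
    mgf_bound_of_finite μ (Z i) (hZmeas i) (P (r i)) (hPnonneg (r i)) (hProw (r i))
      (hZdist i) (g i) hc₁pos (fun j => hbdd i j) (hmean i) t
  -- negated versions
  set g' : Fin n → Fin k → ℝ := fun i j => -(g i j) with hg'
  set X' : Fin n → Ω → ℝ := fun i => g' i ∘ Z i with hX'
  have hmeasX' : ∀ i, Measurable (X' i) := fun i =>
    (measurable_of_finite (g' i)).comp (hZmeas i)
  have hindepX' : iIndepFun X' μ :=
    hindep.comp g' fun i => measurable_of_finite (g' i)
  have hmgfX' : ∀ i (t : ℝ), mgf (X' i) μ t ≤ Real.exp (t ^ 2 * c₁ ^ 2 / 2) := fun i t =>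
    mgf_bound_of_finite μ (Z i) (hZmeas i) (P (r i)) (hPnonneg (r i)) (hProw (r i))
      (hZdist i) (g' i) hc₁pos (fun j => by rw [hg']; simpa using hbdd i j)
      (by simp only [hg', mul_neg, Finset.sum_neg_distrib]; rw [hmean i]; ring) t
  -- tail bounds
  set b : ℝ := c₁ * Real.sqrt (2 * Real.log (2 / δ) / n) with hb
  have hlog : 0 ≤ Real.log (2 / δ) := Real.log_nonneg (by rw [le_div_iff₀ hδ0]; linarith)
  have hb0 : 0 ≤ b := by rw [hb]; positivity
  set ε : ℝ := n * b with hεdef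
  have hε : 0 ≤ ε := by positivity
  have hexpval : Real.exp (-(ε ^ 2) / (2 * n * c₁ ^ 2)) = δ / 2 := by
    have hq : Real.sqrt (2 * Real.log (2 / δ) / n) ^ 2 = 2 * Real.log (2 / δ) / n :=
      Real.sq_sqrt (by positivity)
    have h1 : ε ^ 2 = (n:ℝ) ^ 2 * (c₁ ^ 2 * (2 * Real.log (2 / δ) / n)) := by
      rw [hεdef, hb, mul_pow, mul_pow, hq]
    have h2 : -(ε ^ 2) / (2 * n * c₁ ^ 2) = -Real.log (2 / δ) := by
      rw [h1]
      field_simp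
    rw [h2, Real.exp_neg, Real.exp_log (by positivity), inv_div]
  have hnn : 0 < n := Nat.lt_of_lt_of_le Nat.zero_lt_one hn
  have tail1 : (μ {ω | ε ≤ ∑ i, X i ω}).toReal ≤ δ / 2 := by
    have := hoeffding_tail μ hnn X hmeasX hindepX hc₁pos
      (fun i ω => hbdd i (Z i ω)) hmgfX hε
    rwa [hexpval] at this
  have tail2 : (μ {ω | ε ≤ ∑ i, X' i ω}).toReal ≤ δ / 2 := by
    have := hoeffding_tail μ hnn X' hmeasX' hindepX' hc₁pos
      (fun i ω => by simpa [hX', hg'] using hbdd i (Z i ω)) hmgfX' hε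
    rwa [hexpval] at this
  -- the event
  set E : Set Ω := {ω | |(1 / n : ℝ) * ∑ i, α i * (dTilde (Z i ω) - d (r i))| ≤ b} with hE
  have hSX : ∀ ω, ∑ i, α i * (dTilde (Z i ω) - d (r i)) = ∑ i, X i ω := by
    intro ω; rfl
  have hsub : Eᶜ ⊆ {ω | ε ≤ ∑ i, X i ω} ∪ {ω | ε ≤ ∑ i, X' i ω} := by
    intro ω hω
    have hω' : b < |(1 / n : ℝ) * ∑ i, X i ω| := by
      rw [Set.mem_compl_iff, hE, Set.mem_setOf_eq, not_le, hSX ω] at hω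
      exact hω
    have habs : |(1 / n : ℝ) * ∑ i, X i ω| = (1 / n : ℝ) * |∑ i, X i ω| := by
      rw [abs_mul, abs_of_pos (by positivity : (0:ℝ) < (1/n : ℝ))]
    have hlt : ε < |∑ i, X i ω| := by
      rw [habs] at hω'
      rw [hεdef]
      calc (n:ℝ) * b < (n:ℝ) * ((1/n : ℝ) * |∑ i, X i ω|) := by
            exact (mul_lt_mul_iff_right₀ hnpos).2 hω'
        _ = |∑ i, X i ω| := by field_simp
    rcases abs_cases (∑ i, X i ω) with ⟨heq, _⟩ | ⟨heq, _⟩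
    · left
      rw [Set.mem_setOf_eq]
      rw [heq] at hlt
      linarith
    · right
      rw [Set.mem_setOf_eq]
      have hXX' : ∑ i, X' i ω = -∑ i, X i ω := by
        simp [hX', hg', hX, Finset.sum_neg_distrib]
      rw [hXX']
      rw [heq] at hlt
      linarith
  have hA : μ {ω | ε ≤ ∑ i, X i ω} ≤ ENNReal.ofReal (δ / 2) :=
    (ENNReal.le_ofReal_iff_toReal_le (measure_ne_top μ _) (by positivity)).2 tail1
  have hB : μ {ω | ε ≤ ∑ i, X' i ω} ≤ ENNReal.ofReal (δ / 2) :=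
    (ENNReal.le_ofReal_iff_toReal_le (measure_ne_top μ _) (by positivity)).2 tail2
  have hEc : μ Eᶜ ≤ ENNReal.ofReal δ := by
    calc μ Eᶜ ≤ μ ({ω | ε ≤ ∑ i, X i ω} ∪ {ω | ε ≤ ∑ i, X' i ω}) := measure_mono hsub
      _ ≤ μ {ω | ε ≤ ∑ i, X i ω} + μ {ω | ε ≤ ∑ i, X' i ω} := measure_union_le _ _
      _ ≤ ENNReal.ofReal (δ / 2) + ENNReal.ofReal (δ / 2) := add_le_add hA hB
      _ = ENNReal.ofReal δ := by
          rw [← ENNReal.ofReal_add (by positivity) (by positivity)]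
          norm_num
  have hEmeas : MeasurableSet E := by
    have hSmeas : Measurable (fun ω => ∑ i, X i ω) :=
      Finset.measurable_sum Finset.univ fun i _ => hmeasX i
    have : E = {ω | |(1 / n : ℝ) * ∑ i, X i ω| ≤ b} := by
      ext ω; rw [hE, Set.mem_setOf_eq, Set.mem_setOf_eq, hSX ω]
    rw [this]
    exact measurableSet_le ((hSmeas.const_mul _).abs) measurable_const
  have htr : (μ Eᶜ).toReal ≤ δ := by
    have := ENNReal.toReal_mono ENNReal.ofReal_ne_top hEc
    rwa [ENNReal.toReal_ofReal hδ0.le] at this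
  have hsum : (μ E).toReal + (μ Eᶜ).toReal = 1 := by
    rw [← ENNReal.toReal_add (measure_ne_top _ _) (measure_ne_top _ _),
      measure_add_measure_compl hEmeas]
    simp
  have hfinal : 1 - δ ≤ (μ E).toReal := by linarith
  calc ENNReal.ofReal (1 - δ) ≤ ENNReal.ofReal ((μ E).toReal) :=
        ENNReal.ofReal_le_ofReal hfinal
    _ = μ E := ENNReal.ofReal_toReal (measure_ne_top μ E)
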